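/- Let 𝔤 be a finite-dimensional real Lie algebra with an invariant inner product ⟨·,·⟩ (i.e. ⟨⁅z,x⁆,y⟩ + ⟨x,⁅z,y⁆⟩ = 0 for all x,y,z ∈ 𝔤). Let 𝔨 ⊆ 𝔤 be a Lie subalgebra and 𝔥 ⊆ 𝔨 an ideal of 𝔨; let 𝔪₀ be the orthogonal complement of 𝔥 in 𝔨 and 𝔪′ the orthogonal complement of 𝔨 in 𝔤. Assume 𝔪′ is a nonzero irreducible 𝔨-module under the adjoint action (the only subspaces W ⊆ 𝔪′ with ⁅𝔨, W⁆ ⊆ W are 0 and 𝔪′), and assume 𝔪₀ is not an ideal of 𝔤. Then any vector v ∈ 𝔪′ satisfying ⁅v, w⁆ = 0 for all w ∈ 𝔪₀ must be 0. -/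

import Mathlib

/-- **Lemma 2, first part.**
With `𝔤, B, 𝔨, 𝔥, 𝔪₀, 𝔪′` as in the orthogonal reductive decomposition, if `𝔪′` is a
nonzero irreducible `𝔨`-module under the adjoint action and `𝔪₀` is not an ideal of `𝔤`,
then any `v ∈ 𝔪′` with `⁅v, 𝔪₀⁆ = 0` must vanish. -/
theorem eq_zero_of_centralizes_m0
    {L : Type*} [LieRing L] [LieAlgebra ℝ L] [FiniteDimensional ℝ L]
    (B : L →ₗ[ℝ] L →ₗ[ℝ] ℝ)
    (hBsymm : ∀ x y : L, B x y = B y x)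
    (hBpos : ∀ x : L, x ≠ 0 → 0 < B x x)
    (hBinv : ∀ x y z : L, B ⁅z, x⁆ y + B x ⁅z, y⁆ = 0)
    (𝔨 : Submodule ℝ L) (h𝔨 : ∀ x ∈ 𝔨, ∀ y ∈ 𝔨, ⁅x, y⁆ ∈ 𝔨)
    (𝔥 : Submodule ℝ L) (h𝔥𝔨 : 𝔥 ≤ 𝔨)
    (h𝔥ideal : ∀ x ∈ 𝔨, ∀ y ∈ 𝔥, ⁅x, y⁆ ∈ 𝔥)
    (𝔪₀ : Submodule ℝ L)
    (h𝔪₀ : ∀ v : L, v ∈ 𝔪₀ ↔ v ∈ 𝔨 ∧ ∀ w ∈ 𝔥, B v w = 0)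
    (𝔪' : Submodule ℝ L)
    (h𝔪' : ∀ v : L, v ∈ 𝔪' ↔ ∀ w ∈ 𝔨, B v w = 0)
    (h𝔪'ne : 𝔪' ≠ ⊥)
    (h𝔪'irr : ∀ W : Submodule ℝ L, W ≤ 𝔪' →
      (∀ x ∈ 𝔨, ∀ v ∈ W, ⁅x, v⁆ ∈ W) → W = ⊥ ∨ W = 𝔪')
    (h𝔪₀notideal : ¬ (∀ x : L, ∀ v ∈ 𝔪₀, ⁅x, v⁆ ∈ 𝔪₀)) :
    ∀ v ∈ 𝔪', (∀ w ∈ 𝔪₀, ⁅v, w⁆ = 0) → v = 0 := by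
  intro v hv hvw
  -- basic invariance facts
  have hm0k : 𝔪₀ ≤ 𝔨 := fun x hx => ((h𝔪₀ x).1 hx).1
  have hkm0 : ∀ x ∈ 𝔨, ∀ w ∈ 𝔪₀, ⁅x, w⁆ ∈ 𝔪₀ := by
    intro x hx w hw
    obtain ⟨hwk, hwh⟩ := (h𝔪₀ w).1 hw
    refine (h𝔪₀ _).2 ⟨h𝔨 x hx w hwk, fun h hh => ?_⟩
    have := hBinv w h x
    have h2 := hwh ⁅x, h⁆ (h𝔥ideal x hx h hh)
    linarith
  have hkm' : ∀ x ∈ 𝔨, ∀ u ∈ 𝔪', ⁅x, u⁆ ∈ 𝔪' := by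
    intro x hx u hu
    rw [h𝔪']
    intro w hw
    have h1 := hBinv u w x
    have h2 : B u ⁅x, w⁆ = 0 := (h𝔪' u).1 hu _ (h𝔨 x hx w hw)
    linarith
  -- the centralizer submodule
  set Z : Submodule ℝ L := 𝔪' ⊓ ⨅ w ∈ 𝔪₀, LinearMap.ker (LieAlgebra.ad ℝ L w) with hZ
  have hZmem : ∀ u : L, u ∈ Z ↔ u ∈ 𝔪' ∧ ∀ w ∈ 𝔪₀, ⁅u, w⁆ = 0 := by
    intro u
    rw [hZ, Submodule.mem_inf]
    refine and_congr_right fun _ => ?_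
    simp only [Submodule.mem_iInf, LinearMap.mem_ker, LieAlgebra.ad_apply]
    constructor
    · intro h w hw
      rw [← lie_skew, h w hw, neg_zero]
    · intro h w hw
      rw [← lie_skew, h w hw, neg_zero]
  have hZle : Z ≤ 𝔪' := fun u hu => ((hZmem u).1 hu).1
  have hZinv : ∀ x ∈ 𝔨, ∀ u ∈ Z, ⁅x, u⁆ ∈ Z := by
    intro x hx u hu
    obtain ⟨hu1, hu2⟩ := (hZmem u).1 hu
    refine (hZmem _).2 ⟨hkm' x hx u hu1, fun w hw => ?_⟩
    rw [lie_lie, hu2 w hw, lie_zero, zero_sub, hu2 _ (hkm0 x hx w hw), neg_zero]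
  rcases h𝔪'irr Z hZle hZinv with hbot | htop
  · have : v ∈ Z := (hZmem v).2 ⟨hv, hvw⟩
    rw [hbot] at this
    simpa using this
  · -- then 𝔪₀ would be an ideal of L
    exfalso
    apply h𝔪₀notideal
    -- L = 𝔨 ⊔ 𝔪'
    have hrefl : B.IsRefl := fun x y h => by rw [hBsymm]; exact h
    have hnd : (LinearMap.BilinForm.restrict B 𝔨).Nondegenerate := by
      refine (LinearMap.IsRefl.nondegenerate_iff_separatingLeft (fun x y h => ?_)).2 ?_
      · exact hrefl (x : L) (y : L) h
      intro x hx
      by_contra hne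
      have hxne : (x : L) ≠ 0 := fun h => hne (Subtype.ext h)
      have := hBpos x hxne
      have h0 : B (x : L) (x : L) = 0 := hx x
      linarith
    have hcompl := LinearMap.BilinForm.isCompl_orthogonal_of_restrict_nondegenerate
      (B := B) (W := 𝔨) hrefl hnd
    have horth : LinearMap.BilinForm.orthogonal B 𝔨 = 𝔪' := by
      ext u
      rw [LinearMap.BilinForm.mem_orthogonal_iff, h𝔪' u]
      constructor
      · intro h w hw
        rw [hBsymm]
        exact h w hw
      · intro h w hw
        show B w u = 0
        rw [hBsymm]
        exact h w hw
    have hsup : 𝔨 ⊔ 𝔪' = ⊤ := by rw [← horth]; exact hcompl.sup_eq_top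
    intro x w hw
    have hx : x ∈ 𝔨 ⊔ 𝔪' := by rw [hsup]; exact Submodule.mem_top
    obtain ⟨k, hk, m, hm, rfl⟩ := Submodule.mem_sup.1 hx
    have hmZ : m ∈ Z := by rw [htop]; exact hm
    have : ⁅m, w⁆ = 0 := ((hZmem m).1 hmZ).2 w hw
    rw [add_lie, this, add_zero]
    exact hkm0 k hk w hw
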